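/- arXiv:2407.17769 — 2 statements merged into one kernel-verified Lean document; each statement's English description precedes it below -/
import Mathlib

section
/- Let α ∈ (0, ∞) and let E ⊂ ℝ^N be a measurable set of finite measure. Then there exists C > 0 such that for every measurable function f on ℝ^N, sup_{s>0} { s (log(e + s⁻¹))^α (f χ_E)**(s) } ≤ C ‖f χ_E‖_{L^{1,∞}(log L)^{α+1}}; in particular ‖f χ_E‖_{𝔏^{1,∞}(log 𝔏)^α} ≤ C ‖f χ_E‖_{L^{1,∞}(log L)^{α+1}}. -/
open MeasureTheory ENNReal Set

noncomputable def Phi (s : ℝ) : ℝ := Real.log (Real.exp 1 + s)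

/-- The non-increasing rearrangement of `f`, with `inf ∅ = ∞`. -/
noncomputable def rearr {E : Type*} [MeasureSpace E] (f : E → ℝ) (s : ℝ) : ℝ≥0∞ :=
  sInf {l : ℝ≥0∞ | volume {x | l < (‖f x‖₊ : ℝ≥0∞)} ≤ ENNReal.ofReal s}

/-- The maximal (averaged) rearrangement `f**(s) = (1/s)∫₀ˢ f*(τ) dτ`. -/
noncomputable def rearrStar {E : Type*} [MeasureSpace E] (f : E → ℝ) (s : ℝ) : ℝ≥0∞ :=
  (ENNReal.ofReal s)⁻¹ * ∫⁻ τ in Set.Ioo (0 : ℝ) s, rearr f τ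

lemma Phi_one_le {x : ℝ} (hx : 0 ≤ x) : 1 ≤ Phi x := by
  have : Real.log (Real.exp 1) ≤ Real.log (Real.exp 1 + x) :=
    Real.log_le_log (Real.exp_pos 1) (by linarith)
  simpa [Real.log_exp, Phi] using this

lemma Phi_mono {x y : ℝ} (hx : 0 ≤ x) (hxy : x ≤ y) : Phi x ≤ Phi y :=
  Real.log_le_log (by positivity) (by linarith)

-- derivative fact
lemma hasDerivAt_G (α K : ℝ) (hα : 0 < α) {τ : ℝ} (hτ : 0 < τ) :
    HasDerivAt (fun τ : ℝ => K / α * Phi τ⁻¹ ^ (-α))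
      (K * Phi τ⁻¹ ^ (-α - 1) * (Real.exp 1 * τ ^ 2 + τ)⁻¹) τ := by
  have hτ' : τ ≠ 0 := ne_of_gt hτ
  have hpos : 0 < Real.exp 1 + τ⁻¹ := by positivity
  have h1 : HasDerivAt (fun τ : ℝ => Real.exp 1 + τ⁻¹) (-(τ ^ 2)⁻¹) τ :=
    (hasDerivAt_inv hτ').const_add _
  have h2 : HasDerivAt (fun τ : ℝ => Phi τ⁻¹) (-(τ ^ 2)⁻¹ / (Real.exp 1 + τ⁻¹)) τ := by
    simpa [Phi] using h1.log (ne_of_gt hpos)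
  have hL : Phi τ⁻¹ ≠ 0 := by
    have := Phi_one_le (le_of_lt (inv_pos.2 hτ)); linarith
  have h3 := h2.rpow_const (p := -α) (Or.inl hL)
  convert h3.const_mul (K / α) using 1
  · rfl
  · rfl
  have hL1 : (1:ℝ) ≤ Phi τ⁻¹ := Phi_one_le (le_of_lt (inv_pos.2 hτ))
  have : (-α) + -1 = -α - 1 := by ring
  field_simp

noncomputable def Gfun (α K : ℝ) (τ : ℝ) : ℝ := K / α * Phi τ⁻¹ ^ (-α)
noncomputable def Gder (K α : ℝ) (τ : ℝ) : ℝ :=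
  K * Phi τ⁻¹ ^ (-α - 1) * (Real.exp 1 * τ ^ 2 + τ)⁻¹

lemma Gder_cont (α K : ℝ) {a b : ℝ} (ha : 0 < a) :
    ContinuousOn (Gder K α) (Icc a b) := by
  have hpos : ∀ x ∈ Icc a b, 0 < x := fun x hx => lt_of_lt_of_le ha hx.1
  have c1 : ContinuousOn (fun τ : ℝ => Real.exp 1 + τ⁻¹) (Icc a b) :=
    continuousOn_const.add (continuousOn_id.inv₀ (fun x hx => ne_of_gt (hpos x hx)))
  have c2 : ContinuousOn (fun τ : ℝ => Phi τ⁻¹) (Icc a b) :=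
    c1.log (fun x hx => by have := hpos x hx; positivity)
  have c3 : ContinuousOn (fun τ : ℝ => Phi τ⁻¹ ^ (-α - 1)) (Icc a b) :=
    c2.rpow_const (fun x hx => Or.inl (by
      have h1 := Phi_one_le (le_of_lt (inv_pos.2 (hpos x hx))); intro h; rw [h] at h1; linarith))
  have c4 : ContinuousOn (fun τ : ℝ => (Real.exp 1 * τ ^ 2 + τ)⁻¹) (Icc a b) := by
    apply ContinuousOn.inv₀
    · fun_prop
    · intro x hx; have := hpos x hx; have := Real.exp_pos 1; positivity
  exact (continuousOn_const.mul c3).mul c4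

lemma Gder_nonneg (α K : ℝ) (hK : 0 ≤ K) {τ : ℝ} (hτ : 0 < τ) : 0 ≤ Gder K α τ := by
  unfold Gder
  have h1 : (0:ℝ) ≤ Phi τ⁻¹ := le_trans zero_le_one (Phi_one_le (le_of_lt (inv_pos.2 hτ)))
  have := Real.exp_pos 1
  positivity

lemma h0_le_Gder (α K t : ℝ) (hα : 0 < α) (ht : 0 < t) (hK : Real.exp 1 * t + 1 ≤ K)
    {τ : ℝ} (hτ : 0 < τ) (hτt : τ ≤ t) :
    (τ * Phi τ⁻¹ ^ (α + 1))⁻¹ ≤ Gder K α τ := by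
  have hL1 : (1:ℝ) ≤ Phi τ⁻¹ := Phi_one_le (le_of_lt (inv_pos.2 hτ))
  have hL0 : (0:ℝ) ≤ Phi τ⁻¹ := by linarith
  have hrw : (τ * Phi τ⁻¹ ^ (α + 1))⁻¹ = Phi τ⁻¹ ^ (-α - 1) * τ⁻¹ := by
    rw [mul_inv, ← Real.rpow_neg hL0]
    ring_nf
  rw [hrw]
  have he := Real.exp_pos 1
  have hden : 0 < Real.exp 1 * τ ^ 2 + τ := by positivity
  have key : τ⁻¹ ≤ K * (Real.exp 1 * τ ^ 2 + τ)⁻¹ := by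
    rw [inv_eq_one_div, ← div_eq_mul_inv, div_le_div_iff₀ hτ hden]
    nlinarith [mul_le_mul_of_nonneg_right hK hτ.le,
      mul_le_mul_of_nonneg_right (mul_le_mul_of_nonneg_left hτt he.le) hτ.le]
  have hLpow : (0:ℝ) ≤ Phi τ⁻¹ ^ (-α - 1) := Real.rpow_nonneg hL0 _
  calc Phi τ⁻¹ ^ (-α - 1) * τ⁻¹ ≤ Phi τ⁻¹ ^ (-α - 1) * (K * (Real.exp 1 * τ ^ 2 + τ)⁻¹) :=
        mul_le_mul_of_nonneg_left key hLpow
    _ = Gder K α τ := by unfold Gder; ring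

lemma lint_Ioo_le (t : ℝ) (ht : 0 < t) (f : ℝ → ℝ≥0∞) (hf : Measurable f) (B : ℝ≥0∞)
    (h : ∀ ε, 0 < ε → ε < t → ∫⁻ τ in Ioc ε t, f τ ≤ B) :
    ∫⁻ τ in Ioo 0 t, f τ ≤ B := by
  set g : ℕ → ℝ → ℝ≥0∞ := fun n => (Ioc (t / (n + 2)) t).indicator f with hg
  have hmeas : ∀ n, Measurable (g n) := fun n => hf.indicator measurableSet_Ioc
  have hmono : Monotone g := by
    intro n m hnm
    apply Set.indicator_le_indicator_of_subset _ (fun _ => zero_le)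
    apply Ioc_subset_Ioc_left
    apply div_le_div_of_nonneg_left (le_of_lt ht) (by positivity) (by exact_mod_cast by omega)
  have hpt : ∀ x ∈ Ioo 0 t, f x ≤ ⨆ n, g n x := by
    intro x hx
    obtain ⟨n, hn⟩ := exists_nat_gt (t / x)
    refine le_trans (le_of_eq ?_) (le_iSup (fun n => g n x) n)
    have hx1 : t / (n + 2) < x := by
      rw [div_lt_iff₀ (by positivity)]
      rw [div_lt_iff₀ hx.1] at hn
      nlinarith [hx.1]
    simp [hg, Set.indicator_of_mem, Set.mem_Ioc.2 ⟨hx1, le_of_lt hx.2⟩]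
  calc ∫⁻ τ in Ioo 0 t, f τ ≤ ∫⁻ τ in Ioo 0 t, ⨆ n, g n τ :=
        setLIntegral_mono' measurableSet_Ioo hpt
    _ ≤ ∫⁻ τ, ⨆ n, g n τ := setLIntegral_le_lintegral _ _
    _ = ⨆ n, ∫⁻ τ, g n τ := lintegral_iSup hmeas hmono
    _ ≤ B := by
        refine iSup_le fun n => ?_
        have : ∫⁻ τ, g n τ = ∫⁻ τ in Ioc (t / (n + 2)) t, f τ := by
          rw [hg]; exact lintegral_indicator measurableSet_Ioc f
        rw [this]
        exact h _ (by positivity) (div_lt_self ht (by push_cast; linarith [Nat.cast_nonneg (α := ℝ) n]))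

lemma integral_bound (α : ℝ) (hα : 0 < α) (K t : ℝ) (ht : 0 < t)
    (hK : Real.exp 1 * t + 1 ≤ K) :
    ∫⁻ τ in Ioo 0 t, ENNReal.ofReal ((τ * Phi τ⁻¹ ^ (α + 1))⁻¹) ≤
      ENNReal.ofReal (K / α * Phi t⁻¹ ^ (-α)) := by
  have hK0 : (0:ℝ) < K := lt_of_lt_of_le (by positivity) hK
  apply lint_Ioo_le t ht _ ?_ _ ?_
  · apply Measurable.ennreal_ofReal
    apply Measurable.inv
    apply Measurable.mul measurable_id
    exact (Real.measurable_log.comp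
      (measurable_const.add measurable_inv)).pow measurable_const
  · intro ε hε hεt
    have hεt' : ε ≤ t := le_of_lt hεt
    have hderiv : ∀ x ∈ uIcc ε t, HasDerivAt (Gfun α K) (Gder K α x) x := by
      intro x hx
      rw [uIcc_of_le hεt'] at hx
      exact hasDerivAt_G α K hα (lt_of_lt_of_le hε hx.1)
    have hcont : ContinuousOn (Gder K α) (Icc ε t) := Gder_cont α K hε
    have hint : IntervalIntegrable (Gder K α) volume ε t :=
      ContinuousOn.intervalIntegrable (by rw [uIcc_of_le hεt']; exact hcont)
    have hftc : ∫ x in ε..t, Gder K α x = Gfun α K t - Gfun α K ε :=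
      intervalIntegral.integral_eq_sub_of_hasDerivAt hderiv hint
    have hIntOn : IntegrableOn (Gder K α) (Ioc ε t) volume :=
      (hcont.integrableOn_Icc).mono_set Ioc_subset_Icc_self
    have hnn : 0 ≤ᵐ[volume.restrict (Ioc ε t)] Gder K α :=
      (ae_restrict_iff' measurableSet_Ioc).2
        (ae_of_all _ (fun x hx => Gder_nonneg α K hK0.le (lt_trans hε hx.1)))
    calc ∫⁻ τ in Ioc ε t, ENNReal.ofReal ((τ * Phi τ⁻¹ ^ (α + 1))⁻¹)
        ≤ ∫⁻ τ in Ioc ε t, ENNReal.ofReal (Gder K α τ) := by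
          apply setLIntegral_mono' measurableSet_Ioc
          intro x hx
          exact ENNReal.ofReal_le_ofReal
            (h0_le_Gder α K t hα ht hK (lt_trans hε hx.1) hx.2)
      _ = ENNReal.ofReal (∫ τ in Ioc ε t, Gder K α τ) := by
          rw [ofReal_integral_eq_lintegral_ofReal hIntOn hnn]
      _ ≤ ENNReal.ofReal (K / α * Phi t⁻¹ ^ (-α)) := by
          apply ENNReal.ofReal_le_ofReal
          rw [← intervalIntegral.integral_of_le hεt', hftc]
          have h0 : 0 ≤ Gfun α K ε := by
            unfold Gfun
            have : (0:ℝ) ≤ Phi ε⁻¹ := le_trans zero_le_one (Phi_one_le (by positivity))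
            positivity
          unfold Gfun at h0 ⊢; linarith


lemma key_bound (α : ℝ) (hα : 0 < α) (m : ℝ) (hm : 0 < m) (u : ℝ → ℝ≥0∞)
    (hu0 : ∀ τ : ℝ, m ≤ τ → u τ = 0) (s : ℝ) (hs : 0 < s) :
    ENNReal.ofReal (Phi s⁻¹ ^ α) * ∫⁻ τ in Ioo (0:ℝ) s, u τ ≤
      ENNReal.ofReal ((Real.exp 1 * m + 1) / α) *
        ⨆ (r : ℝ) (_ : 0 < r),
          ENNReal.ofReal r * ENNReal.ofReal (Phi r⁻¹ ^ (α + 1)) * u r := by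
  set R := ⨆ (r : ℝ) (_ : 0 < r),
      ENNReal.ofReal r * ENNReal.ofReal (Phi r⁻¹ ^ (α + 1)) * u r with hR
  set t := min s m with htdef
  have ht : 0 < t := lt_min hs hm
  have hts : t ≤ s := min_le_left _ _
  have htm : t ≤ m := min_le_right _ _
  have he := Real.exp_pos 1
  -- step 1 : restrict the integral to (0, t)
  have step1 : ∫⁻ τ in Ioo (0:ℝ) s, u τ ≤ ∫⁻ τ in Ioo (0:ℝ) t, u τ := by
    rcases le_or_gt s m with h | h
    · have hts' : t = s := min_eq_left h
      rw [hts']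
    · have htm' : t = m := min_eq_right h.le
      have hunion : Ioo (0:ℝ) s = Ioo 0 t ∪ Ico t s := by
        rw [htm']; exact (Ioo_union_Ico_eq_Ioo hm h.le).symm
      have hzero : ∫⁻ τ in Ico t s, u τ = 0 := by
        refine le_antisymm ?_ zero_le
        calc ∫⁻ τ in Ico t s, u τ ≤ ∫⁻ _ in Ico t s, (0:ℝ≥0∞) :=
              setLIntegral_mono' measurableSet_Ico
                (fun x hx => le_of_eq (hu0 x (htm' ▸ hx.1)))
          _ = 0 := lintegral_zero
      rw [hunion, lintegral_union measurableSet_Ico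
        (Set.disjoint_left.2 fun x hx1 hx2 => absurd hx1.2 (not_lt.2 hx2.1)), hzero, add_zero]
  -- step 2 : pointwise bound on (0, t)
  have hpt : ∀ τ ∈ Ioo (0:ℝ) t,
      u τ ≤ R * ENNReal.ofReal ((τ * Phi τ⁻¹ ^ (α + 1))⁻¹) := by
    intro τ hτ
    have hτ0 : 0 < τ := hτ.1
    have hL1 : (1:ℝ) ≤ Phi τ⁻¹ := Phi_one_le (by positivity)
    have ha : (0:ℝ) < τ * Phi τ⁻¹ ^ (α + 1) := by positivity
    have hsup : ENNReal.ofReal τ * ENNReal.ofReal (Phi τ⁻¹ ^ (α + 1)) * u τ ≤ R := by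
      rw [hR]
      exact le_iSup_of_le τ (le_iSup_of_le hτ0 le_rfl)
    rw [← ENNReal.ofReal_mul hτ0.le] at hsup
    have hne0 : ENNReal.ofReal (τ * Phi τ⁻¹ ^ (α + 1)) ≠ 0 :=
      ne_of_gt (ENNReal.ofReal_pos.2 ha)
    calc u τ = (ENNReal.ofReal (τ * Phi τ⁻¹ ^ (α + 1)))⁻¹ *
          (ENNReal.ofReal (τ * Phi τ⁻¹ ^ (α + 1)) * u τ) := by
            rw [← mul_assoc, ENNReal.inv_mul_cancel hne0 ENNReal.ofReal_ne_top, one_mul]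
      _ ≤ (ENNReal.ofReal (τ * Phi τ⁻¹ ^ (α + 1)))⁻¹ * R := mul_le_mul_right hsup _
      _ = R * ENNReal.ofReal ((τ * Phi τ⁻¹ ^ (α + 1))⁻¹) := by
            rw [ENNReal.ofReal_inv_of_pos ha, mul_comm]
  -- step 3 : integrate
  have hKt : Real.exp 1 * t + 1 ≤ Real.exp 1 * m + 1 := by nlinarith
  have step3 : ∫⁻ τ in Ioo (0:ℝ) t, u τ ≤
      R * ENNReal.ofReal ((Real.exp 1 * m + 1) / α * Phi t⁻¹ ^ (-α)) := by
    calc ∫⁻ τ in Ioo (0:ℝ) t, u τ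
        ≤ ∫⁻ τ in Ioo (0:ℝ) t, R * ENNReal.ofReal ((τ * Phi τ⁻¹ ^ (α + 1))⁻¹) :=
          setLIntegral_mono' measurableSet_Ioo hpt
      _ = R * ∫⁻ τ in Ioo (0:ℝ) t, ENNReal.ofReal ((τ * Phi τ⁻¹ ^ (α + 1))⁻¹) := by
          apply lintegral_const_mul
          apply Measurable.ennreal_ofReal
          apply Measurable.inv
          apply Measurable.mul measurable_id
          exact (Real.measurable_log.comp
            (measurable_const.add measurable_inv)).pow measurable_const
      _ ≤ R * ENNReal.ofReal ((Real.exp 1 * m + 1) / α * Phi t⁻¹ ^ (-α)) :=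
          mul_le_mul_right (integral_bound α hα _ t ht hKt) _
  -- conclusion
  have hΦs : (0:ℝ) ≤ Phi s⁻¹ := le_trans zero_le_one (Phi_one_le (by positivity))
  have hΦt1 : (1:ℝ) ≤ Phi t⁻¹ := Phi_one_le (by positivity)
  have hΦst : Phi s⁻¹ ≤ Phi t⁻¹ :=
    Phi_mono (by positivity) (by apply inv_anti₀ ht hts)
  have hreal : Phi s⁻¹ ^ α * ((Real.exp 1 * m + 1) / α * Phi t⁻¹ ^ (-α)) ≤
      (Real.exp 1 * m + 1) / α := by
    have h1 : Phi s⁻¹ ^ α ≤ Phi t⁻¹ ^ α := Real.rpow_le_rpow hΦs hΦst hα.le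
    have h2 : Phi t⁻¹ ^ (-α) = (Phi t⁻¹ ^ α)⁻¹ := by
      rw [Real.rpow_neg (by linarith)]
    have h3 : (0:ℝ) < Phi t⁻¹ ^ α := Real.rpow_pos_of_pos (by linarith) _
    have h4 : (0:ℝ) ≤ (Real.exp 1 * m + 1) / α := by positivity
    rw [h2]
    calc Phi s⁻¹ ^ α * ((Real.exp 1 * m + 1) / α * (Phi t⁻¹ ^ α)⁻¹)
        ≤ Phi t⁻¹ ^ α * ((Real.exp 1 * m + 1) / α * (Phi t⁻¹ ^ α)⁻¹) := by
          apply mul_le_mul_of_nonneg_right h1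
          positivity
      _ = (Real.exp 1 * m + 1) / α := by
          rw [mul_comm ((Real.exp 1 * m + 1) / α), ← mul_assoc,
            mul_inv_cancel₀ (ne_of_gt h3), one_mul]
  calc ENNReal.ofReal (Phi s⁻¹ ^ α) * ∫⁻ τ in Ioo (0:ℝ) s, u τ
      ≤ ENNReal.ofReal (Phi s⁻¹ ^ α) *
          (R * ENNReal.ofReal ((Real.exp 1 * m + 1) / α * Phi t⁻¹ ^ (-α))) :=
        mul_le_mul_right (step1.trans step3) _
    _ = R * (ENNReal.ofReal (Phi s⁻¹ ^ α) *
          ENNReal.ofReal ((Real.exp 1 * m + 1) / α * Phi t⁻¹ ^ (-α))) := by ring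
    _ = R * ENNReal.ofReal (Phi s⁻¹ ^ α *
          ((Real.exp 1 * m + 1) / α * Phi t⁻¹ ^ (-α))) := by
        rw [← ENNReal.ofReal_mul (Real.rpow_nonneg hΦs _)]
    _ ≤ R * ENNReal.ofReal ((Real.exp 1 * m + 1) / α) :=
        mul_le_mul_right (ENNReal.ofReal_le_ofReal hreal) _
    _ = ENNReal.ofReal ((Real.exp 1 * m + 1) / α) * R := mul_comm _ _

lemma rearr_indicator_zero {N : ℕ} (E : Set (Fin N → ℝ)) (f : (Fin N → ℝ) → ℝ)
    (τ : ℝ) (hle : volume E ≤ ENNReal.ofReal τ) : rearr (E.indicator f) τ = 0 := by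
  refine le_antisymm (sInf_le ?_) zero_le
  show volume {x | (0:ℝ≥0∞) < (‖E.indicator f x‖₊ : ℝ≥0∞)} ≤ ENNReal.ofReal τ
  refine le_trans (measure_mono ?_) hle
  intro x hx
  by_contra hxE
  simp only [mem_setOf_eq, Set.indicator_of_notMem hxE] at hx
  simp at hx

theorem stmt13 {N : ℕ} (α : ℝ) (hα : 0 < α)
    (E : Set (Fin N → ℝ)) (hE : MeasurableSet E) (hEfin : volume E < ∞) :
    ∃ C : ℝ, 0 < C ∧ ∀ f : (Fin N → ℝ) → ℝ, Measurable f →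
      (⨆ (s : ℝ) (_ : 0 < s),
          ENNReal.ofReal s * ENNReal.ofReal (Phi s⁻¹ ^ α) * rearrStar (E.indicator f) s) ≤
        ENNReal.ofReal C *
          ⨆ (s : ℝ) (_ : 0 < s),
            ENNReal.ofReal s * ENNReal.ofReal (Phi s⁻¹ ^ (α + 1)) * rearr (E.indicator f) s ∧
      (⨆ (s : ℝ) (_ : 0 < s),
          ENNReal.ofReal (Phi s⁻¹ ^ α) * ∫⁻ τ in Set.Ioo (0 : ℝ) s, rearr (E.indicator f) τ) ≤
        ENNReal.ofReal C *
          ⨆ (s : ℝ) (_ : 0 < s),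
            ENNReal.ofReal s * ENNReal.ofReal (Phi s⁻¹ ^ (α + 1)) * rearr (E.indicator f) s := by
  set m : ℝ := max (volume E).toReal 1 with hm_def
  have hm : 0 < m := lt_of_lt_of_le one_pos (le_max_right _ _)
  refine ⟨(Real.exp 1 * m + 1) / α, by positivity, fun f hf => ?_⟩
  set u : ℝ → ℝ≥0∞ := rearr (E.indicator f) with hu_def
  have hu0 : ∀ τ : ℝ, m ≤ τ → u τ = 0 := by
    intro τ hτ
    apply rearr_indicator_zero
    calc volume E = ENNReal.ofReal (volume E).toReal := (ENNReal.ofReal_toReal hEfin.ne).symm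
      _ ≤ ENNReal.ofReal τ :=
        ENNReal.ofReal_le_ofReal (le_trans (le_max_left _ _) hτ)
  have hpart2 : (⨆ (s : ℝ) (_ : 0 < s),
      ENNReal.ofReal (Phi s⁻¹ ^ α) * ∫⁻ τ in Set.Ioo (0 : ℝ) s, u τ) ≤
        ENNReal.ofReal ((Real.exp 1 * m + 1) / α) *
          ⨆ (s : ℝ) (_ : 0 < s),
            ENNReal.ofReal s * ENNReal.ofReal (Phi s⁻¹ ^ (α + 1)) * u s := by
    refine iSup_le fun s => iSup_le fun hs => ?_
    exact key_bound α hα m hm u hu0 s hs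
  have heq : (⨆ (s : ℝ) (_ : 0 < s),
      ENNReal.ofReal s * ENNReal.ofReal (Phi s⁻¹ ^ α) * rearrStar (E.indicator f) s) =
      ⨆ (s : ℝ) (_ : 0 < s),
        ENNReal.ofReal (Phi s⁻¹ ^ α) * ∫⁻ τ in Set.Ioo (0 : ℝ) s, u τ := by
    refine iSup_congr fun s => ?_
    rcases le_or_gt s 0 with h | h
    · rw [iSup_neg (by exact not_lt.2 h), iSup_neg (by exact not_lt.2 h)]
    · rw [iSup_pos h, iSup_pos h]
      unfold rearrStar
      have h0 : ENNReal.ofReal s ≠ 0 := ne_of_gt (ENNReal.ofReal_pos.2 h)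
      calc ENNReal.ofReal s * ENNReal.ofReal (Phi s⁻¹ ^ α) *
            ((ENNReal.ofReal s)⁻¹ * ∫⁻ τ in Set.Ioo (0 : ℝ) s, u τ)
          = (ENNReal.ofReal s * (ENNReal.ofReal s)⁻¹) *
            (ENNReal.ofReal (Phi s⁻¹ ^ α) * ∫⁻ τ in Set.Ioo (0 : ℝ) s, u τ) := by ring
        _ = ENNReal.ofReal (Phi s⁻¹ ^ α) * ∫⁻ τ in Set.Ioo (0 : ℝ) s, u τ := by
            rw [ENNReal.mul_inv_cancel h0 ENNReal.ofReal_ne_top, one_mul]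
  exact ⟨heq ▸ hpart2, hpart2⟩
end

section
/- For the critical singular profile μ_c(x) := |x|^{−N} (log(e + 1/|x|))^{−N/θ} on ℝ^N with 0 < θ < N, the restriction μ_c χ_{B(0,1)} satisfies: its non-increasing rearrangement obeys (μ_c χ_{B(0,1)})*(s) = O(s⁻¹ |log s|^{−N/θ}) as s → 0⁺, and ∫₀ˢ (μ_c χ_{B(0,1)})*(τ) dτ = O(|log s|^{−(N−θ)/θ}) as s → 0⁺; consequently μ_c χ_{B(0,1)} belongs to the weak Zygmund space 𝔏^{1,∞}(log 𝔏)^{(N−θ)/θ}. -/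
open MeasureTheory ENNReal Set

/-- The critical singular profile `μ_c(x) = |x|^{-N} (log(e + 1/|x|))^{-N/θ}`. -/
noncomputable def muC (N : ℕ) (θ : ℝ) (x : EuclideanSpace ℝ (Fin N)) : ℝ :=
  ‖x‖ ^ (-(N : ℝ)) * Phi ‖x‖⁻¹ ^ (-((N : ℝ) / θ))

/-- The restriction of `μ_c` to the unit ball, `μ_c χ_{B(0,1)}`. -/
noncomputable def muCball (N : ℕ) (θ : ℝ) : EuclideanSpace ℝ (Fin N) → ℝ :=
  (Metric.ball (0 : EuclideanSpace ℝ (Fin N)) 1).indicator (muC N θ)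

/-! ### Auxiliary constants -/

noncomputable def Kc (N : ℕ) : ℝ := Real.sqrt Real.pi ^ N / Real.Gamma (N / 2 + 1)

noncomputable def pc (N : ℕ) (θ : ℝ) : ℝ := (N : ℝ) / θ

noncomputable def bc (N : ℕ) (θ : ℝ) : ℝ := ((N : ℝ) - θ) / θ

noncomputable def C1 (N : ℕ) (θ : ℝ) : ℝ :=
  Kc N * (4 * N) ^ pc N θ + Real.sqrt (Kc N) * ((4 * pc N θ)⁻¹) ^ (-(pc N θ))

noncomputable def s0c (N : ℕ) : ℝ := Real.exp (-(2 * |Real.log (Kc N)| + 2))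

lemma Kc_pos (N : ℕ) : 0 < Kc N := by
  apply div_pos (pow_pos (Real.sqrt_pos.2 Real.pi_pos) N)
  exact Real.Gamma_pos_of_pos (by positivity)

lemma Phi_nonneg {t : ℝ} (ht : 0 ≤ t) : 0 ≤ Phi t := by
  apply Real.log_nonneg
  nlinarith [Real.add_one_le_exp (1:ℝ)]

lemma one_le_Phi {t : ℝ} (ht : 0 ≤ t) : 1 ≤ Phi t := by
  have : (1:ℝ) = Real.log (Real.exp 1) := (Real.log_exp 1).symm
  rw [this]
  exact Real.log_le_log (Real.exp_pos 1) (by linarith)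

lemma Phi_mono_s19 {a b : ℝ} (ha : 0 ≤ a) (hab : a ≤ b) : Phi a ≤ Phi b :=
  Real.log_le_log (by positivity) (by linarith)

lemma muC_nonneg (N : ℕ) (θ : ℝ) (x : EuclideanSpace ℝ (Fin N)) : 0 ≤ muC N θ x :=
  mul_nonneg (Real.rpow_nonneg (norm_nonneg x) _)
    (Real.rpow_nonneg (Phi_nonneg (by positivity)) _)

lemma muCball_nonneg (N : ℕ) (θ : ℝ) (x : EuclideanSpace ℝ (Fin N)) : 0 ≤ muCball N θ x :=
  Set.indicator_nonneg (fun y _ => muC_nonneg N θ y) x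

lemma ennnorm_muCball (N : ℕ) (θ : ℝ) (x : EuclideanSpace ℝ (Fin N)) :
    (‖muCball N θ x‖₊ : ℝ≥0∞) = ENNReal.ofReal (muCball N θ x) :=
  Real.enorm_eq_ofReal (muCball_nonneg N θ x)

lemma rearr_le {E : Type*} [MeasureSpace E] {f : E → ℝ} {s : ℝ} {l : ℝ≥0∞}
    (h : volume {x | l < (‖f x‖₊ : ℝ≥0∞)} ≤ ENNReal.ofReal s) : rearr f s ≤ l :=
  sInf_le h

lemma rearr_anti {E : Type*} [MeasureSpace E] (f : E → ℝ) {s t : ℝ} (hst : s ≤ t) :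
    rearr f t ≤ rearr f s :=
  sInf_le_sInf (fun l hl => le_trans hl (ENNReal.ofReal_le_ofReal hst))

section LemA

variable {N : ℕ} {θ : ℝ}

lemma basic_facts (hθ0 : 0 < θ) (hθN : θ < N) :
    0 < (N:ℝ) ∧ 1 < pc N θ ∧ 0 < bc N θ ∧ bc N θ = pc N θ - 1 ∧ 0 < C1 N θ := by
  have hN : (0:ℝ) < N := hθ0.trans hθN
  have hp1 : 1 < pc N θ := (one_lt_div hθ0).2 hθN
  have hb : bc N θ = pc N θ - 1 := by unfold bc pc; field_simp
  have hbpos : 0 < bc N θ := by rw [hb]; linarith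
  refine ⟨hN, hp1, hbpos, hb, ?_⟩
  have hK := Kc_pos N
  have h1 : 0 < Kc N * (4 * N) ^ pc N θ :=
    mul_pos hK (Real.rpow_pos_of_pos (by positivity) _)
  have h2 : 0 ≤ Real.sqrt (Kc N) * ((4 * pc N θ)⁻¹) ^ (-(pc N θ)) :=
    mul_nonneg (Real.sqrt_nonneg _) (Real.rpow_nonneg (by positivity) _)
  unfold C1; linarith

lemma log_facts {s : ℝ} (hs0 : 0 < s) (hs : s < s0c N) :
    Real.log s < -(2 * |Real.log (Kc N)| + 2) ∧ 0 < -Real.log s ∧ s < 1 ∧ s < Kc N := by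
  have hK := Kc_pos N
  have h1 : Real.log s < -(2 * |Real.log (Kc N)| + 2) := by
    have := Real.log_lt_log hs0 hs
    rwa [s0c, Real.log_exp] at this
  have h2 : 0 < -Real.log s := by
    have := abs_nonneg (Real.log (Kc N)); linarith
  have h3 : s < 1 := by
    have h0 : s0c N ≤ 1 := by
      rw [s0c, ← Real.exp_zero]
      apply Real.exp_le_exp.2
      have := abs_nonneg (Real.log (Kc N)); linarith
    linarith
  have h4 : s < Kc N := by
    have hlek : -|Real.log (Kc N)| ≤ Real.log (Kc N) := neg_abs_le _
    have : Real.log s < Real.log (Kc N) := by linarith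
    calc s = Real.exp (Real.log s) := (Real.exp_log hs0).symm
      _ < Real.exp (Real.log (Kc N)) := Real.exp_lt_exp.2 this
      _ = Kc N := Real.exp_log hK
  exact ⟨h1, h2, h3, h4⟩

lemma lemA (hθ0 : 0 < θ) (hθN : θ < N) {s : ℝ} (hs0 : 0 < s) (hs : s < s0c N) :
    rearr (muCball N θ) s ≤
      ENNReal.ofReal (C1 N θ * s⁻¹ * (-Real.log s) ^ (-(pc N θ))) := by
  obtain ⟨hN, hp1, hbpos, hb, hC1⟩ := basic_facts hθ0 hθN
  obtain ⟨hlog, hL, hs1, hsK⟩ := log_facts hs0 hs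
  have hp0 : 0 < pc N θ := one_pos.trans hp1
  have hK := Kc_pos N
  have hNnat : 0 < N := by exact_mod_cast hN
  have hN0 : (N:ℝ) ≠ 0 := ne_of_gt hN
  haveI : Nonempty (Fin N) := ⟨⟨0, hNnat⟩⟩
  set p := pc N θ with hpdef
  set K := Kc N with hKdef
  set lam := C1 N θ * s⁻¹ * (-Real.log s) ^ (-p) with hlam
  have hsK' : 0 < s / K := div_pos hs0 hK
  have hlam0 : 0 < lam := by
    apply mul_pos (mul_pos hC1 (by positivity))
    exact Real.rpow_pos_of_pos hL _
  set ρ := (s / K) ^ ((N:ℝ)⁻¹) with hρdef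
  have hρ0 : 0 < ρ := Real.rpow_pos_of_pos hsK' _
  set t := (s / K) ^ ((2 * (N:ℝ))⁻¹) with htdef
  have ht0 : 0 < t := Real.rpow_pos_of_pos hsK' _
  -- the superlevel set is contained in the ball of radius ρ
  have hsub : {x : EuclideanSpace ℝ (Fin N) |
      ENNReal.ofReal lam < (‖muCball N θ x‖₊ : ℝ≥0∞)} ⊆ Metric.ball 0 ρ := by
    intro x hx
    rw [mem_setOf_eq, ennnorm_muCball] at hx
    have hlt : lam < muCball N θ x :=
      (ENNReal.ofReal_lt_ofReal_iff_of_nonneg hlam0.le).1 hx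
    have hxball : x ∈ Metric.ball (0 : EuclideanSpace ℝ (Fin N)) 1 := by
      by_contra hxb
      rw [muCball, indicator_of_notMem hxb] at hlt
      linarith
    rw [muCball, indicator_of_mem hxball] at hlt
    rw [mem_ball_zero_iff]
    by_contra hle
    push_neg at hle
    set r := ‖x‖ with hrdef
    have hr0 : 0 < r := lt_of_lt_of_le hρ0 hle
    have hr1 : r < 1 := mem_ball_zero_iff.1 hxball
    have hΦ0 : (0:ℝ) ≤ Phi r⁻¹ := Phi_nonneg (by positivity)
    have hΦ1 : 1 ≤ Phi r⁻¹ := one_le_Phi (by positivity)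
    have hmu : muC N θ x = r ^ (-(N:ℝ)) * Phi r⁻¹ ^ (-p) := rfl
    -- we derive a contradiction by showing muC N θ x ≤ lam
    have key : muC N θ x ≤ lam := by
      rcases le_total r t with hcase | hcase
      · -- case A : ρ ≤ r ≤ t
        have h1 : r ^ (-(N:ℝ)) ≤ K / s := by
          have ha : r ^ (-(N:ℝ)) ≤ ρ ^ (-(N:ℝ)) :=
            Real.rpow_le_rpow_of_nonpos hρ0 hle (by linarith)
          have hb' : ρ ^ (-(N:ℝ)) = K / s := by
            rw [hρdef, ← Real.rpow_mul hsK'.le]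
            have he : (N:ℝ)⁻¹ * (-(N:ℝ)) = -1 := by field_simp
            rw [he, Real.rpow_neg_one, inv_div]
          linarith [hb' ▸ ha]
        have hA : (-Real.log s) / (4 * (N:ℝ)) ≤ Phi r⁻¹ := by
          have hri : (0:ℝ) < r⁻¹ := by positivity
          have hlog1 : Real.log r⁻¹ ≤ Phi r⁻¹ :=
            Real.log_le_log hri (by unfold Phi at *; linarith [Real.exp_pos 1])
          have hti : t⁻¹ ≤ r⁻¹ := inv_anti₀ hr0 hcase
          have hlog2 : Real.log t⁻¹ ≤ Real.log r⁻¹ := Real.log_le_log (by positivity) hti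
          have hlogt : Real.log t⁻¹ = (2*(N:ℝ))⁻¹ * (Real.log K - Real.log s) := by
            rw [Real.log_inv, htdef, Real.log_rpow hsK',
              Real.log_div (ne_of_gt hs0) (ne_of_gt hK)]
            ring
          have habs : -(Real.log s)/2 ≤ Real.log K - Real.log s := by
            have := neg_abs_le (Real.log K); linarith
          have hid : ∀ y : ℝ, (2*(N:ℝ))⁻¹ * (y/2) = y/(4*(N:ℝ)) := fun y => by
            rw [inv_mul_eq_div, div_div]; ring_nf
          calc (-Real.log s)/(4*(N:ℝ)) = (2*(N:ℝ))⁻¹ * (-(Real.log s)/2) := by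
                rw [hid]
            _ ≤ (2*(N:ℝ))⁻¹ * (Real.log K - Real.log s) :=
                mul_le_mul_of_nonneg_left habs (by positivity)
            _ = Real.log t⁻¹ := hlogt.symm
            _ ≤ Real.log r⁻¹ := hlog2
            _ ≤ Phi r⁻¹ := hlog1
        have hA0 : 0 < (-Real.log s)/(4*(N:ℝ)) := by positivity
        have h2 : Phi r⁻¹ ^ (-p) ≤ ((-Real.log s)/(4*(N:ℝ))) ^ (-p) :=
          Real.rpow_le_rpow_of_nonpos hA0 hA (by linarith)
        have h3 : ((-Real.log s)/(4*(N:ℝ))) ^ (-p) = (-Real.log s) ^ (-p) * (4*(N:ℝ))^p := by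
          rw [Real.div_rpow hL.le (by positivity),
            Real.rpow_neg (show (0:ℝ) ≤ 4*(N:ℝ) by positivity), div_eq_mul_inv, inv_inv]
        have hc : K * (4*(N:ℝ))^p ≤ C1 N θ := by
          have h2' : 0 ≤ Real.sqrt K * ((4*p)⁻¹) ^ (-p) :=
            mul_nonneg (Real.sqrt_nonneg _) (Real.rpow_nonneg (by positivity) _)
          have hC1eq : C1 N θ = K * (4*(N:ℝ))^p + Real.sqrt K * ((4*p)⁻¹) ^ (-p) := rfl
          linarith
        calc muC N θ x = r ^ (-(N:ℝ)) * Phi r⁻¹ ^ (-p) := hmu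
          _ ≤ (K/s) * (((-Real.log s)/(4*(N:ℝ))) ^ (-p)) :=
              mul_le_mul h1 h2 (Real.rpow_nonneg hΦ0 _) (by positivity)
          _ = (K * (4*(N:ℝ))^p) * s⁻¹ * (-Real.log s)^(-p) := by
              rw [h3, div_eq_mul_inv]; ring
          _ ≤ lam := by
              rw [hlam]
              have h4 : (0:ℝ) ≤ s⁻¹ * (-Real.log s)^(-p) :=
                mul_nonneg (by positivity) (Real.rpow_nonneg hL.le _)
              nlinarith [mul_le_mul_of_nonneg_right hc h4]
      · -- case B : t ≤ r
        have h1 : Phi r⁻¹ ^ (-p) ≤ 1 :=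
          Real.rpow_le_one_of_one_le_of_nonpos hΦ1 (by linarith)
        have h2 : r ^ (-(N:ℝ)) ≤ Real.sqrt K * s ^ (-(2⁻¹:ℝ)) := by
          have ha : r ^ (-(N:ℝ)) ≤ t ^ (-(N:ℝ)) :=
            Real.rpow_le_rpow_of_nonpos ht0 hcase (by linarith)
          have hb' : t ^ (-(N:ℝ)) = Real.sqrt K * s ^ (-(2⁻¹:ℝ)) := by
            rw [htdef, ← Real.rpow_mul hsK'.le]
            have he : (2*(N:ℝ))⁻¹ * (-(N:ℝ)) = -(2⁻¹:ℝ) := by field_simp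
            rw [he, Real.div_rpow hs0.le hK.le, Real.rpow_neg hK.le, div_eq_mul_inv,
              inv_inv, Real.sqrt_eq_rpow, mul_comm]
            norm_num
          linarith [hb' ▸ ha]
        set ε := (4*p)⁻¹ with hεdef
        have hε : (0:ℝ) < ε := by rw [hεdef]; positivity
        have hlog1 : -Real.log s ≤ s ^ (-ε) / ε := by
          have h := Real.log_le_rpow_div (inv_nonneg.2 hs0.le) hε
          rwa [Real.log_inv, Real.inv_rpow hs0.le, ← Real.rpow_neg hs0.le] at h
        have hlog2 : (-Real.log s) ^ p ≤ s ^ (-(4⁻¹:ℝ)) * ε^(-p) := by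
          have hεp : -ε * p = -(4⁻¹ : ℝ) := by rw [hεdef]; field_simp
          calc (-Real.log s)^p ≤ (s^(-ε)/ε)^p := Real.rpow_le_rpow hL.le hlog1 hp0.le
            _ = s^(-ε*p) / ε^p := by
                rw [Real.div_rpow (Real.rpow_nonneg hs0.le _) hε.le, ← Real.rpow_mul hs0.le]
            _ = s^(-(4⁻¹:ℝ)) * ε^(-p) := by
                rw [hεp, div_eq_mul_inv, ← Real.rpow_neg hε.le]
        have hone : (-Real.log s)^p * (-Real.log s)^(-p) = 1 := by
          rw [← Real.rpow_add hL, add_neg_cancel, Real.rpow_zero]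
        have hhalf : s ^ ((2⁻¹:ℝ)) * s⁻¹ = s ^ (-(2⁻¹:ℝ)) := by
          rw [← Real.rpow_neg_one s, ← Real.rpow_add hs0]; norm_num
        have hbound : Real.sqrt K * s ^ ((2⁻¹:ℝ)) * (-Real.log s)^p ≤ C1 N θ := by
          calc Real.sqrt K * s ^ ((2⁻¹:ℝ)) * (-Real.log s)^p
              ≤ Real.sqrt K * s ^ ((2⁻¹:ℝ)) * (s^(-(4⁻¹:ℝ)) * ε^(-p)) :=
                mul_le_mul_of_nonneg_left hlog2 (by positivity)
            _ = Real.sqrt K * ε^(-p) * (s ^ ((2⁻¹:ℝ)) * s^(-(4⁻¹:ℝ))) := by ring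
            _ = Real.sqrt K * ε^(-p) * s ^ ((4⁻¹:ℝ)) := by
                rw [← Real.rpow_add hs0]; norm_num
            _ ≤ Real.sqrt K * ε^(-p) * 1 :=
                mul_le_mul_of_nonneg_left (Real.rpow_le_one hs0.le hs1.le (by norm_num))
                  (by positivity)
            _ = Real.sqrt K * ε^(-p) := mul_one _
            _ ≤ C1 N θ := by
                have h1' : 0 < K * (4*(N:ℝ))^p :=
                  mul_pos hK (Real.rpow_pos_of_pos (by positivity) _)
                have hC1eq : C1 N θ = K * (4*(N:ℝ))^p + Real.sqrt K * ε ^ (-p) := rfl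
                linarith
        have hmain : Real.sqrt K * s ^ (-(2⁻¹:ℝ)) ≤ lam := by
          have hid : (Real.sqrt K * s ^ ((2⁻¹:ℝ)) * (-Real.log s)^p) *
              (s⁻¹ * (-Real.log s)^(-p))
              = Real.sqrt K * (s ^ ((2⁻¹:ℝ)) * s⁻¹) *
                ((-Real.log s)^p * (-Real.log s)^(-p)) := by ring
          calc Real.sqrt K * s ^ (-(2⁻¹:ℝ))
              = (Real.sqrt K * s ^ ((2⁻¹:ℝ)) * (-Real.log s)^p) *
                (s⁻¹ * (-Real.log s)^(-p)) := by rw [hid, hone, hhalf, mul_one]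
            _ ≤ C1 N θ * (s⁻¹ * (-Real.log s)^(-p)) := by
                apply mul_le_mul_of_nonneg_right hbound
                exact mul_nonneg (by positivity) (Real.rpow_nonneg hL.le _)
            _ = lam := by rw [hlam, mul_assoc]
        calc muC N θ x = r ^ (-(N:ℝ)) * Phi r⁻¹ ^ (-p) := hmu
          _ ≤ (Real.sqrt K * s ^ (-(2⁻¹:ℝ))) * 1 :=
              mul_le_mul h2 h1 (Real.rpow_nonneg hΦ0 _) (by positivity)
          _ = Real.sqrt K * s ^ (-(2⁻¹:ℝ)) := mul_one _
          _ ≤ lam := hmain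
    linarith
  apply rearr_le
  calc volume {x : EuclideanSpace ℝ (Fin N) |
        ENNReal.ofReal lam < (‖muCball N θ x‖₊ : ℝ≥0∞)}
      ≤ volume (Metric.ball (0:EuclideanSpace ℝ (Fin N)) ρ) := measure_mono hsub
    _ = ENNReal.ofReal s := by
        rw [EuclideanSpace.volume_ball, Fintype.card_fin,
          ← ENNReal.ofReal_pow hρ0.le]
        have hρN : ρ ^ N = s / K := by
          rw [hρdef, ← Real.rpow_natCast ((s/K) ^ ((N:ℝ)⁻¹)) N, ← Real.rpow_mul hsK'.le]
          rw [show ((N:ℝ)⁻¹ * ((N:ℕ):ℝ) : ℝ) = 1 by field_simp]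
          exact Real.rpow_one _
        rw [hρN, ← ENNReal.ofReal_mul hsK'.le]
        congr 1
        have hKC : Real.sqrt Real.pi ^ N / Real.Gamma ((N:ℝ)/2+1) = K := rfl
        rw [hKC, div_mul_cancel₀ _ (ne_of_gt hK)]

end LemA

/-! ### The integral bound -/

noncomputable def grf (N : ℕ) (θ : ℝ) (τ : ℝ) : ℝ :=
  C1 N θ * τ⁻¹ * (-Real.log τ) ^ (-(pc N θ))

noncomputable def Ff (N : ℕ) (θ : ℝ) (τ : ℝ) : ℝ :=
  (C1 N θ / bc N θ) * (-Real.log τ) ^ (-(bc N θ))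

section LemB

variable {N : ℕ} {θ : ℝ}

lemma grf_cont {a b : ℝ} (ha : 0 < a) (hb : b < 1) :
    ContinuousOn (grf N θ) (Icc a b) := by
  intro τ hτ
  have hτ0 : 0 < τ := lt_of_lt_of_le ha hτ.1
  have hτ1 : τ < 1 := lt_of_le_of_lt hτ.2 hb
  have hLτ : 0 < -Real.log τ := by
    have := Real.log_neg hτ0 hτ1; linarith
  apply ContinuousAt.continuousWithinAt
  apply ContinuousAt.mul
  · exact continuousAt_const.mul (continuousAt_inv₀ (ne_of_gt hτ0))
  · have hinner : ContinuousAt (fun x : ℝ => -Real.log x) τ :=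
      (Real.continuousAt_log (ne_of_gt hτ0)).neg
    have houter : ContinuousAt (fun y : ℝ => y ^ (-(pc N θ))) (-Real.log τ) :=
      Real.continuousAt_rpow_const _ _ (Or.inl (ne_of_gt hLτ))
    exact ContinuousAt.comp (f := fun x : ℝ => -Real.log x) houter hinner

lemma hasDeriv_Ff (hθ0 : 0 < θ) (hθN : θ < N) {τ : ℝ} (hτ0 : 0 < τ) (hτ1 : τ < 1) :
    HasDerivAt (Ff N θ) (grf N θ τ) τ := by
  obtain ⟨hN, hp1, hbpos, hb, hC1⟩ := basic_facts hθ0 hθN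
  have hbne : bc N θ ≠ 0 := ne_of_gt hbpos
  have hLτ : 0 < -Real.log τ := by have := Real.log_neg hτ0 hτ1; linarith
  have h1 : HasDerivAt (fun t : ℝ => -Real.log t) (-τ⁻¹) τ :=
    (Real.hasDerivAt_log (ne_of_gt hτ0)).neg
  have h2 : HasDerivAt (fun y : ℝ => y ^ (-(bc N θ)))
      (-(bc N θ) * (-Real.log τ) ^ (-(bc N θ) - 1)) (-Real.log τ) :=
    Real.hasDerivAt_rpow_const (Or.inl (ne_of_gt hLτ))
  have h3 := (h2.comp τ h1).const_mul (C1 N θ / bc N θ)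
  refine h3.congr_deriv ?_
  have hexp : -(bc N θ) - 1 = -(pc N θ) := by rw [hb]; ring
  show _ = C1 N θ * τ⁻¹ * (-Real.log τ) ^ (-(pc N θ))
  rw [← hexp]
  field_simp

lemma lemB (hθ0 : 0 < θ) (hθN : θ < N) {s : ℝ} (hs0 : 0 < s) (hs : s < s0c N) :
    (∫⁻ τ in Set.Ioo (0:ℝ) s, rearr (muCball N θ) τ) ≤
      ENNReal.ofReal (Ff N θ s) := by
  obtain ⟨hN, hp1, hbpos, hb, hC1⟩ := basic_facts hθ0 hθN
  obtain ⟨hlog, hL, hs1, hsK⟩ := log_facts hs0 hs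
  have hmeas : Measurable (fun τ : ℝ => ENNReal.ofReal (grf N θ τ)) := by
    apply ENNReal.measurable_ofReal.comp
    unfold grf
    measurability
  have hstep1 : (∫⁻ τ in Set.Ioo (0:ℝ) s, rearr (muCball N θ) τ) ≤
      ∫⁻ τ in Set.Ioo (0:ℝ) s, ENNReal.ofReal (grf N θ τ) := by
    apply setLIntegral_mono hmeas
    intro τ hτ
    exact lemA hθ0 hθN hτ.1 (hτ.2.trans hs)
  have hstep2 : ∀ n : ℕ, (∫⁻ τ in Set.Ioo (s/(n+2)) s, ENNReal.ofReal (grf N θ τ)) ≤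
      ENNReal.ofReal (Ff N θ s) := by
    intro n
    have hn2 : (0:ℝ) < (n:ℝ)+2 := by positivity
    set ε := s/((n:ℝ)+2) with hεdef
    have hε0 : 0 < ε := div_pos hs0 hn2
    have hεs : ε < s := by
      rw [hεdef, div_lt_iff₀ hn2]
      nlinarith
    have hcont : ContinuousOn (grf N θ) (Icc ε s) := grf_cont hε0 hs1
    have hderiv : ∀ τ ∈ uIcc ε s, HasDerivAt (Ff N θ) (grf N θ τ) τ := by
      intro τ hτ
      rw [uIcc_of_le hεs.le] at hτ
      exact hasDeriv_Ff hθ0 hθN (lt_of_lt_of_le hε0 hτ.1) (lt_of_le_of_lt hτ.2 hs1)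
    have hint : IntervalIntegrable (grf N θ) volume ε s := by
      apply ContinuousOn.intervalIntegrable
      rwa [uIcc_of_le hεs.le]
    have hftc := intervalIntegral.integral_eq_sub_of_hasDerivAt hderiv hint
    have hioo : IntegrableOn (grf N θ) (Ioo ε s) volume :=
      hcont.integrableOn_Icc.mono_set Ioo_subset_Icc_self
    have hnn : 0 ≤ᵐ[volume.restrict (Ioo ε s)] (grf N θ) := by
      refine (ae_restrict_iff' measurableSet_Ioo).2 (Filter.Eventually.of_forall ?_)
      intro τ hτ
      have hτ0 : 0 < τ := hε0.trans hτ.1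
      have hτ1 : τ < 1 := hτ.2.trans hs1
      have hLτ : 0 ≤ -Real.log τ := by have := Real.log_neg hτ0 hτ1; linarith
      have h := Real.rpow_nonneg hLτ (-(pc N θ))
      unfold grf
      positivity
    have heq : (∫⁻ τ in Set.Ioo ε s, ENNReal.ofReal (grf N θ τ)) =
        ENNReal.ofReal (∫ τ in Set.Ioo ε s, grf N θ τ) :=
      (ofReal_integral_eq_lintegral_ofReal hioo hnn).symm
    rw [heq]
    apply ENNReal.ofReal_le_ofReal
    have hval : (∫ τ in Set.Ioo ε s, grf N θ τ) = Ff N θ s - Ff N θ ε := by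
      rw [← integral_Ioc_eq_integral_Ioo, ← intervalIntegral.integral_of_le hεs.le, hftc]
    rw [hval]
    have hFε : 0 ≤ Ff N θ ε := by
      have hε1 : ε < 1 := hεs.trans hs1
      have hLε : 0 ≤ -Real.log ε := by have := Real.log_neg hε0 hε1; linarith
      have h := Real.rpow_nonneg hLε (-(bc N θ))
      unfold Ff
      positivity
    linarith
  have hunion : Set.Ioo (0:ℝ) s = ⋃ n : ℕ, Set.Ioo (s/((n:ℝ)+2)) s := by
    ext τ
    simp only [mem_iUnion, mem_Ioo]
    constructor
    · rintro ⟨hτ0, hτs⟩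
      obtain ⟨n, hn⟩ := exists_nat_gt (s/τ)
      refine ⟨n, ?_, hτs⟩
      rw [div_lt_iff₀ (by positivity)]
      nlinarith [(div_lt_iff₀ hτ0).1 hn]
    · rintro ⟨n, hn, hτs⟩
      have h0 : 0 < s/((n:ℝ)+2) := by positivity
      exact ⟨h0.trans hn, hτs⟩
  have hmono : Monotone (fun n : ℕ => Set.Ioo (s/((n:ℝ)+2)) s) := by
    intro m n hmn
    apply Ioo_subset_Ioo_left
    gcongr
  calc (∫⁻ τ in Set.Ioo (0:ℝ) s, rearr (muCball N θ) τ)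
      ≤ ∫⁻ τ in Set.Ioo (0:ℝ) s, ENNReal.ofReal (grf N θ τ) := hstep1
    _ = (volume.withDensity fun τ => ENNReal.ofReal (grf N θ τ)) (Set.Ioo 0 s) :=
        (withDensity_apply _ measurableSet_Ioo).symm
    _ = ⨆ n : ℕ, (volume.withDensity fun τ => ENNReal.ofReal (grf N θ τ))
          (Set.Ioo (s/((n:ℝ)+2)) s) := by
        rw [hunion]
        exact Directed.measure_iUnion hmono.directed_le
    _ ≤ ENNReal.ofReal (Ff N θ s) := by
        apply iSup_le
        intro n
        rw [withDensity_apply _ measurableSet_Ioo]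
        exact hstep2 n

end LemB

lemma rearr_zero {N : ℕ} {θ : ℝ} (hθ0 : 0 < θ) (hθN : θ < N) {τ : ℝ} (hτ : Kc N ≤ τ) :
    rearr (muCball N θ) τ = 0 := by
  have hN : (0:ℝ) < N := hθ0.trans hθN
  have hNnat : 0 < N := by exact_mod_cast hN
  haveI : Nonempty (Fin N) := ⟨⟨0, hNnat⟩⟩
  apply le_antisymm _ zero_le
  apply rearr_le
  have hsub : {x : EuclideanSpace ℝ (Fin N) | (0:ℝ≥0∞) < (‖muCball N θ x‖₊ : ℝ≥0∞)} ⊆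
      Metric.ball 0 1 := by
    intro x hx
    by_contra hxb
    rw [mem_setOf_eq, muCball, indicator_of_notMem hxb] at hx
    simp at hx
  calc volume {x : EuclideanSpace ℝ (Fin N) | (0:ℝ≥0∞) < (‖muCball N θ x‖₊ : ℝ≥0∞)}
      ≤ volume (Metric.ball (0 : EuclideanSpace ℝ (Fin N)) 1) := measure_mono hsub
    _ = ENNReal.ofReal (Kc N) := by
        rw [EuclideanSpace.volume_ball, Fintype.card_fin, ENNReal.ofReal_one, one_pow, one_mul]
        rfl
    _ ≤ ENNReal.ofReal τ := ENNReal.ofReal_le_ofReal hτ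

theorem stmt19 (N : ℕ) (θ : ℝ) (hθ0 : 0 < θ) (hθN : θ < N) :
    (∃ C : ℝ, 0 < C ∧ ∃ s₀ : ℝ, 0 < s₀ ∧ ∀ s : ℝ, 0 < s → s < s₀ →
      rearr (muCball N θ) s ≤
        ENNReal.ofReal (C * s⁻¹ * |Real.log s| ^ (-((N : ℝ) / θ))) ∧
      (∫⁻ τ in Set.Ioo (0 : ℝ) s, rearr (muCball N θ) τ) ≤
        ENNReal.ofReal (C * |Real.log s| ^ (-(((N : ℝ) - θ) / θ)))) ∧
    (⨆ (s : ℝ) (_ : 0 < s),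
        ENNReal.ofReal (Phi s⁻¹ ^ (((N : ℝ) - θ) / θ)) *
          ∫⁻ τ in Set.Ioo (0 : ℝ) s, rearr (muCball N θ) τ) < ∞ := by
  obtain ⟨hN, hp1, hbpos, hb, hC1⟩ := basic_facts hθ0 hθN
  have hbne : bc N θ ≠ 0 := ne_of_gt hbpos
  have hK := Kc_pos N
  set Cf := C1 N θ + C1 N θ / bc N θ + 1 with hCf
  have hdivpos : 0 < C1 N θ / bc N θ := div_pos hC1 hbpos
  have hCfpos : 0 < Cf := by rw [hCf]; linarith
  have hC1Cf : C1 N θ ≤ Cf := by rw [hCf]; linarith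
  have hC1bCf : C1 N θ / bc N θ ≤ Cf := by rw [hCf]; linarith
  have hbceq : ((N:ℝ)-θ)/θ = bc N θ := rfl
  have hpceq : (N:ℝ)/θ = pc N θ := rfl
  -- part 1 helpers
  have part1a : ∀ s : ℝ, 0 < s → s < s0c N →
      rearr (muCball N θ) s ≤
        ENNReal.ofReal (Cf * s⁻¹ * |Real.log s| ^ (-((N : ℝ) / θ))) := by
    intro s hs0 hss
    obtain ⟨hlog, hL, hs1, hsK⟩ := log_facts hs0 hss
    have habs : |Real.log s| = -Real.log s := abs_of_neg (by linarith)
    refine le_trans (lemA hθ0 hθN hs0 hss) (ENNReal.ofReal_le_ofReal ?_)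
    rw [habs, hpceq]
    have hX : 0 ≤ (-Real.log s) ^ (-(pc N θ)) := Real.rpow_nonneg hL.le _
    have h1 : C1 N θ * s⁻¹ ≤ Cf * s⁻¹ :=
      mul_le_mul_of_nonneg_right hC1Cf (by positivity)
    exact mul_le_mul_of_nonneg_right h1 hX
  have part1b : ∀ s : ℝ, 0 < s → s < s0c N →
      (∫⁻ τ in Set.Ioo (0 : ℝ) s, rearr (muCball N θ) τ) ≤
        ENNReal.ofReal (Cf * |Real.log s| ^ (-(((N : ℝ) - θ) / θ))) := by
    intro s hs0 hss
    obtain ⟨hlog, hL, hs1, hsK⟩ := log_facts hs0 hss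
    have habs : |Real.log s| = -Real.log s := abs_of_neg (by linarith)
    refine le_trans (lemB hθ0 hθN hs0 hss) (ENNReal.ofReal_le_ofReal ?_)
    rw [habs, hbceq]
    unfold Ff
    exact mul_le_mul_of_nonneg_right hC1bCf (Real.rpow_nonneg hL.le _)
  refine ⟨⟨Cf, hCfpos, s0c N, Real.exp_pos _, fun s hs0 hss => ⟨part1a s hs0 hss,
    part1b s hs0 hss⟩⟩, ?_⟩
  -- the supremum part
  set s2 := s0c N / 2 with hs2
  have hs0cpos : 0 < s0c N := Real.exp_pos _
  have hs20 : 0 < s2 := by rw [hs2]; linarith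
  have hs2lt : s2 < s0c N := by rw [hs2]; linarith [Real.exp_pos (-(2 * |Real.log (Kc N)| + 2))]
  obtain ⟨hlog2, hL2, hs21, hs2K⟩ := log_facts hs20 hs2lt
  set J := ENNReal.ofReal (Ff N θ s2) +
    rearr (muCball N θ) s2 * ENNReal.ofReal (Kc N + 1) with hJ
  -- uniform bound on the integral
  have hIs : ∀ s : ℝ, (∫⁻ τ in Set.Ioo (0 : ℝ) s, rearr (muCball N θ) τ) ≤ J := by
    intro s
    have hsubset : Set.Ioo (0:ℝ) s ⊆
        Set.Ioo 0 s2 ∪ (Set.Ico s2 (Kc N + 1) ∪ Set.Ici (Kc N + 1)) := by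
      intro τ hτ
      rcases lt_or_ge τ s2 with h | h
      · exact Or.inl ⟨hτ.1, h⟩
      rcases lt_or_ge τ (Kc N + 1) with h' | h'
      · exact Or.inr (Or.inl ⟨h, h'⟩)
      · exact Or.inr (Or.inr h')
    have h1 : (∫⁻ τ in Set.Ioo (0:ℝ) s2, rearr (muCball N θ) τ) ≤
        ENNReal.ofReal (Ff N θ s2) := lemB hθ0 hθN hs20 hs2lt
    have h2 : (∫⁻ τ in Set.Ico s2 (Kc N + 1), rearr (muCball N θ) τ) ≤
        rearr (muCball N θ) s2 * ENNReal.ofReal (Kc N + 1) := by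
      calc (∫⁻ τ in Set.Ico s2 (Kc N + 1), rearr (muCball N θ) τ)
          ≤ ∫⁻ _ in Set.Ico s2 (Kc N + 1), rearr (muCball N θ) s2 :=
            setLIntegral_mono measurable_const (fun τ hτ => rearr_anti _ hτ.1)
        _ = rearr (muCball N θ) s2 * volume (Set.Ico s2 (Kc N + 1)) :=
            setLIntegral_const _ _
        _ ≤ rearr (muCball N θ) s2 * ENNReal.ofReal (Kc N + 1) := by
            apply mul_le_mul_right
            rw [Real.volume_Ico]
            exact ENNReal.ofReal_le_ofReal (by linarith)
    have h3 : (∫⁻ τ in Set.Ici (Kc N + 1), rearr (muCball N θ) τ) = 0 := by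
      apply le_antisymm _ zero_le
      calc (∫⁻ τ in Set.Ici (Kc N + 1), rearr (muCball N θ) τ)
          ≤ ∫⁻ _ in Set.Ici (Kc N + 1), (0:ℝ≥0∞) :=
            setLIntegral_mono measurable_const
              (fun τ hτ => le_of_eq (rearr_zero hθ0 hθN (by linarith [mem_Ici.1 hτ])))
        _ = 0 := lintegral_zero
    calc (∫⁻ τ in Set.Ioo (0:ℝ) s, rearr (muCball N θ) τ)
        ≤ ∫⁻ τ in Set.Ioo 0 s2 ∪ (Set.Ico s2 (Kc N + 1) ∪ Set.Ici (Kc N + 1)),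
            rearr (muCball N θ) τ := lintegral_mono_set hsubset
      _ ≤ (∫⁻ τ in Set.Ioo (0:ℝ) s2, rearr (muCball N θ) τ) +
          ((∫⁻ τ in Set.Ico s2 (Kc N + 1), rearr (muCball N θ) τ) +
           (∫⁻ τ in Set.Ici (Kc N + 1), rearr (muCball N θ) τ)) :=
          le_trans (lintegral_union_le _ _ _)
            (add_le_add_right (lintegral_union_le _ _ _) _)
      _ ≤ J := by
          rw [hJ, h3, add_zero]
          exact add_le_add h1 h2
  -- bound for small s
  have hsmall : ∀ s : ℝ, 0 < s → s ≤ s2 →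
      ENNReal.ofReal (Phi s⁻¹ ^ bc N θ) *
        (∫⁻ τ in Set.Ioo (0 : ℝ) s, rearr (muCball N θ) τ) ≤
      ENNReal.ofReal (2 ^ bc N θ * Cf) := by
    intro s hs0 hss2
    have hss : s < s0c N := lt_of_le_of_lt hss2 hs2lt
    obtain ⟨hlog, hL, hs1, hsK⟩ := log_facts hs0 hss
    have hΦnn : 0 ≤ Phi s⁻¹ := Phi_nonneg (by positivity)
    have hΦbcnn : 0 ≤ Phi s⁻¹ ^ bc N θ := Real.rpow_nonneg hΦnn _
    calc ENNReal.ofReal (Phi s⁻¹ ^ bc N θ) *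
          (∫⁻ τ in Set.Ioo (0 : ℝ) s, rearr (muCball N θ) τ)
        ≤ ENNReal.ofReal (Phi s⁻¹ ^ bc N θ) * ENNReal.ofReal (Ff N θ s) :=
          mul_le_mul_right (lemB hθ0 hθN hs0 hss) _
      _ = ENNReal.ofReal (Phi s⁻¹ ^ bc N θ * Ff N θ s) :=
          (ENNReal.ofReal_mul hΦbcnn).symm
      _ ≤ ENNReal.ofReal (2 ^ bc N θ * Cf) := by
          apply ENNReal.ofReal_le_ofReal
          -- the real inequality
          have hs0c2 : s0c N ≤ Real.exp (-2) := by
            apply Real.exp_le_exp.2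
            have := abs_nonneg (Real.log (Kc N)); linarith
          have hsle : s ≤ (Real.exp 2)⁻¹ := by
            rw [← Real.exp_neg]; linarith
          have hsinv : Real.exp 2 ≤ s⁻¹ := by
            have := inv_anti₀ hs0 hsle
            rwa [inv_inv] at this
          have hexp2 : (3:ℝ) ≤ Real.exp 2 := by
            have := Real.add_one_le_exp (2:ℝ); linarith
          have he1 : Real.exp 1 ≤ Real.exp 2 := Real.exp_le_exp.2 (by norm_num)
          have hmul : Real.exp 1 + s⁻¹ ≤ s⁻¹ * s⁻¹ := by nlinarith
          have hΦle : Phi s⁻¹ ≤ 2 * (-Real.log s) := by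
            have hlog1 : Phi s⁻¹ ≤ Real.log (s⁻¹ * s⁻¹) :=
              Real.log_le_log (by positivity) hmul
            rw [Real.log_mul (by positivity) (by positivity), Real.log_inv] at hlog1
            linarith
          have hΦbc : Phi s⁻¹ ^ bc N θ ≤ 2 ^ bc N θ * (-Real.log s) ^ bc N θ := by
            rw [← Real.mul_rpow (by norm_num) hL.le]
            exact Real.rpow_le_rpow hΦnn hΦle hbpos.le
          have hone : (-Real.log s) ^ bc N θ * (-Real.log s) ^ (-(bc N θ)) = 1 := by
            rw [← Real.rpow_add hL, add_neg_cancel, Real.rpow_zero]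
          have hFnn : 0 ≤ (-Real.log s) ^ (-(bc N θ)) := Real.rpow_nonneg hL.le _
          calc Phi s⁻¹ ^ bc N θ * Ff N θ s
              = Phi s⁻¹ ^ bc N θ * (C1 N θ / bc N θ * (-Real.log s) ^ (-(bc N θ))) := rfl
            _ ≤ (2 ^ bc N θ * (-Real.log s) ^ bc N θ) *
                (C1 N θ / bc N θ * (-Real.log s) ^ (-(bc N θ))) := by
                apply mul_le_mul_of_nonneg_right hΦbc
                exact mul_nonneg hdivpos.le hFnn
            _ = 2 ^ bc N θ * (C1 N θ / bc N θ) *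
                ((-Real.log s) ^ bc N θ * (-Real.log s) ^ (-(bc N θ))) := by ring
            _ = 2 ^ bc N θ * (C1 N θ / bc N θ) := by rw [hone, mul_one]
            _ ≤ 2 ^ bc N θ * Cf := by
                apply mul_le_mul_of_nonneg_left hC1bCf
                exact Real.rpow_nonneg (by norm_num) _
  -- assemble the supremum bound
  set D := ENNReal.ofReal (2 ^ bc N θ * Cf) +
    ENNReal.ofReal (Phi s2⁻¹ ^ bc N θ) * J with hD
  have hsup : (⨆ (s : ℝ) (_ : 0 < s),
      ENNReal.ofReal (Phi s⁻¹ ^ (((N : ℝ) - θ) / θ)) *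
        ∫⁻ τ in Set.Ioo (0 : ℝ) s, rearr (muCball N θ) τ) ≤ D := by
    refine iSup_le fun s => iSup_le fun hs0 => ?_
    rw [hbceq]
    rcases le_total s s2 with hcase | hcase
    · exact le_trans (hsmall s hs0 hcase) le_self_add
    · have hΦmono : Phi s⁻¹ ^ bc N θ ≤ Phi s2⁻¹ ^ bc N θ := by
        apply Real.rpow_le_rpow (Phi_nonneg (by positivity))
          (Phi_mono_s19 (by positivity) (inv_anti₀ hs20 hcase)) hbpos.le
      calc ENNReal.ofReal (Phi s⁻¹ ^ bc N θ) *
            (∫⁻ τ in Set.Ioo (0 : ℝ) s, rearr (muCball N θ) τ)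
          ≤ ENNReal.ofReal (Phi s2⁻¹ ^ bc N θ) * J :=
            mul_le_mul' (ENNReal.ofReal_le_ofReal hΦmono) (hIs s)
        _ ≤ D := le_add_self
  refine lt_of_le_of_lt hsup ?_
  rw [hD, hJ]
  have hfin1 : rearr (muCball N θ) s2 < ⊤ :=
    lt_of_le_of_lt (lemA hθ0 hθN hs20 hs2lt) ENNReal.ofReal_lt_top
  apply ENNReal.add_lt_top.2
  refine ⟨ENNReal.ofReal_lt_top, ?_⟩
  apply ENNReal.mul_lt_top ENNReal.ofReal_lt_top
  apply ENNReal.add_lt_top.2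
  exact ⟨ENNReal.ofReal_lt_top, ENNReal.mul_lt_top hfin1 ENNReal.ofReal_lt_top⟩
end
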